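/- Let X₁ and X₀ be groups and d, c : X₁ → X₀, e : X₀ → X₁ group homomorphisms with d ∘ e = id and c ∘ e = id, and let D = {(a,b) ∈ X₁ × X₁ : d(a) = c(b)}. Suppose the Peiffer identity holds: for all a, b ∈ ker d, e(c(a)) · b · e(c(a))⁻¹ = a · b · a⁻¹. Then the map m : D → X₁ defined by m(a,b) = b · e(c(b))⁻¹ · a is a group homomorphism, and it satisfies m(a, e(d(a))) = a and m(e(c(b)), b) = b for all a, b ∈ X₁. -/
import Mathlib


/-- The subgroup of composable pairs of a reflexive graph of groups:
`D = {(a,b) ∈ X₁ × X₁ : d a = c b}`. -/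
def compPairs {X₁ X₀ : Type*} [Group X₁] [Group X₀] (d c : X₁ →* X₀) :
    Subgroup (X₁ × X₁) where
  carrier := {p | d p.1 = c p.2}
  one_mem' := by simp
  mul_mem' := by
    intro a b ha hb
    simp only [Set.mem_setOf_eq, Prod.fst_mul, Prod.snd_mul, map_mul] at *
    rw [ha, hb]
  inv_mem' := by
    intro a ha
    simp only [Set.mem_setOf_eq, Prod.fst_inv, Prod.snd_inv, map_inv] at *
    rw [ha]

theorem mem_compPairs {X₁ X₀ : Type*} [Group X₁] [Group X₀] (d c : X₁ →* X₀)
    (p : X₁ × X₁) : p ∈ compPairs d c ↔ d p.1 = c p.2 := Iff.rfl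

/-- if the Peiffer identity holds on `ker d`, then
`m (a, b) = b * (e (c b))⁻¹ * a` is a group homomorphism on composable pairs and
satisfies the unit laws of an internal category. -/
theorem internal_category_of_peiffer {X₁ X₀ : Type*} [Group X₁] [Group X₀]
    (d c : X₁ →* X₀) (e : X₀ →* X₁)
    (hde : ∀ x, d (e x) = x) (hce : ∀ x, c (e x) = x)
    (peiffer : ∀ a b : X₁, a ∈ d.ker → b ∈ d.ker →
      e (c a) * b * (e (c a))⁻¹ = a * b * a⁻¹) :
    ∃ m : compPairs d c →* X₁,
      (∀ p : compPairs d c,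
        m p = (p : X₁ × X₁).2 * (e (c (p : X₁ × X₁).2))⁻¹ * (p : X₁ × X₁).1) ∧
      (∀ a : X₁, m ⟨(a, e (d a)), (mem_compPairs d c _).mpr (hce (d a)).symm⟩ = a) ∧
      (∀ b : X₁, m ⟨(e (c b), b), (mem_compPairs d c _).mpr (hde (c b))⟩ = b) := by
  -- key commutation: elements of ker d commute with `b * (e (c b))⁻¹`
  have comm : ∀ g b : X₁, g ∈ d.ker →
      b * (e (c b))⁻¹ * g = g * (b * (e (c b))⁻¹) := by
    intro g b hg
    have ha : e (d b) * b⁻¹ ∈ d.ker := by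
      simp [MonoidHom.mem_ker, hde]
    have h := peiffer _ g ha hg
    have hca : c (e (d b) * b⁻¹) = d b * (c b)⁻¹ := by
      simp [hce]
    rw [hca, map_mul, map_inv] at h
    -- h : e (d b) * (e (c b))⁻¹ * g * (e (d b) * (e (c b))⁻¹)⁻¹
    --   = e (d b) * b⁻¹ * g * (e (d b) * b⁻¹)⁻¹
    have h2 : (e (c b))⁻¹ * g * e (c b) = b⁻¹ * g * b := by
      have h' := congrArg (fun x => (e (d b))⁻¹ * x * e (d b)) h
      simp only [mul_inv_rev, inv_inv] at h'
      calc (e (c b))⁻¹ * g * e (c b)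
          = (e (d b))⁻¹ * (e (d b) * (e (c b))⁻¹ * g *
              (e (c b) * (e (d b))⁻¹)) * e (d b) := by group
        _ = (e (d b))⁻¹ * (e (d b) * b⁻¹ * g * (b * (e (d b))⁻¹)) * e (d b) := h'
        _ = b⁻¹ * g * b := by group
    calc b * (e (c b))⁻¹ * g
        = b * ((e (c b))⁻¹ * g * e (c b)) * (e (c b))⁻¹ := by group
      _ = b * (b⁻¹ * g * b) * (e (c b))⁻¹ := by rw [h2]
      _ = g * (b * (e (c b))⁻¹) := by group
  refine ⟨{ toFun := fun p => (p : X₁ × X₁).2 * (e (c (p : X₁ × X₁).2))⁻¹ * (p : X₁ × X₁).1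
            map_one' := by simp
            map_mul' := ?_ }, fun p => rfl, ?_, ?_⟩
  · rintro ⟨⟨a₁, b₁⟩, hp⟩ ⟨⟨a₂, b₂⟩, hq⟩
    have hp' : d a₁ = c b₁ := hp
    have hg : (e (c b₁))⁻¹ * a₁ ∈ d.ker := by
      simp [MonoidHom.mem_ker, hde, hp']
    have key := comm _ b₂ hg
    simp only [Submonoid.coe_mul, Subgroup.coe_toSubmonoid, Prod.fst_mul, Prod.snd_mul,
      map_mul, mul_inv_rev, MulMemClass.mk_mul_mk]
    calc b₁ * b₂ * ((e (c b₂))⁻¹ * (e (c b₁))⁻¹) * (a₁ * a₂)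
        = b₁ * (b₂ * (e (c b₂))⁻¹ * ((e (c b₁))⁻¹ * a₁)) * a₂ := by group
      _ = b₁ * ((e (c b₁))⁻¹ * a₁ * (b₂ * (e (c b₂))⁻¹)) * a₂ := by rw [key]
      _ = b₁ * (e (c b₁))⁻¹ * a₁ * (b₂ * (e (c b₂))⁻¹ * a₂) := by group
  · intro a
    simp [hce, hde]
  · intro b
    simp [hce]
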